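/- Let A ⊆ ℤ⁺ be infinite with strictly increasing enumeration (a_n)_{n=0}^∞, let (λ_m)_{m=0}^∞ be positive reals, f : ℕ → ℕ, and Θ ≥ 0 a real with |a_n − λ_{f(n)}| ≤ Θ for all n ∈ ℕ. Fix integers k, l ≥ 1 and r ∈ ℤ, and set s = max{|r|, ⌈(k+l)Θ⌉}. Suppose (m̄,n̄) ∈ A(k,l,r), and suppose there are nonempty subsets I* ⊆ {1,…,k} and J* ⊆ {1,…,l}, at least one of which is proper, such that Σ_{i∈I*} λ_{f(m_i)} = Σ_{j∈J*} λ_{f(n_j)}. Then (m̄,n̄) ∈ A(k,l,r,s). -/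
import Mathlib


open Filter Pointwise

/-- The `k`-fold sumset `X + ⋯ + X` (`k` times) of a set of integers. -/
def kFold (X : Set ℤ) (k : ℕ) : Set ℤ :=
  {z : ℤ | ∃ f : Fin k → ℤ, (∀ i, f i ∈ X) ∧ z = ∑ i, f i}

/-- `Σ_n(X) = ⋃_{k=1}^n k(X)`. -/
def sigmaSum (n : ℕ) (X : Set ℤ) : Set ℤ :=
  ⋃ k ∈ Finset.Icc 1 n, kFold X k

/-- `±A = {x ∈ ℤ : |x| ∈ A}`. -/
def pmSet (A : Set ℤ) : Set ℤ := {x : ℤ | |x| ∈ A}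

/-- The lower asymptotic density of a set of naturals:
`liminf_{n → ∞} |A ∩ {1,…,n}| / n`. -/
noncomputable def lowerDensity (A : Set ℕ) : ℝ :=
  Filter.liminf (fun n : ℕ => (Set.ncard (A ∩ Set.Icc 1 n) : ℝ) / n) Filter.atTop

/-- The set of naturals whose image in `ℤ` lies in `S`. -/
def intSetToNat (S : Set ℤ) : Set ℕ := {n : ℕ | (n : ℤ) ∈ S}

/-- `A ⊆ ℤ` is sufficiently sparse if `δ̲(Σ_n(±A) ∩ ℕ) = 0` for all `n ≥ 1`. -/
def SuffSparse (A : Set ℤ) : Prop :=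
  ∀ n : ℕ, 1 ≤ n → lowerDensity (intSetToNat (sigmaSum n (pmSet A))) = 0

/-- A set `S` of (positive) reals is geometric if `{s/t : s, t ∈ S, t ≤ s}` is a closed
and discrete subset of `ℝ`. -/
def IsGeometric (S : Set ℝ) : Prop :=
  IsClosed {x : ℝ | ∃ s ∈ S, ∃ t ∈ S, t ≤ s ∧ x = s / t} ∧
    DiscreteTopology {x : ℝ | ∃ s ∈ S, ∃ t ∈ S, t ≤ s ∧ x = s / t}

/-- `A ⊆ ℤ` is geometrically sparse if there is `f : A → ℝ⁺` with `f(A)` geometric and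
`sup_{a ∈ A} |a − f(a)| < ∞`. -/
def GeomSparse (A : Set ℤ) : Prop :=
  ∃ f : ℤ → ℝ, (∀ a ∈ A, 0 < f a) ∧ IsGeometric (f '' A) ∧
    ∃ C : ℝ, ∀ a ∈ A, |(a : ℝ) - f a| ≤ C

/-- `(m̄,n̄) ∈ A(k,l,r)`: `r + a_{m_1} + ⋯ + a_{m_k} = a_{n_1} + ⋯ + a_{n_l}`, where
`(a_i)` enumerates `A`. -/
def inRel (a : ℕ → ℤ) {k l : ℕ} (r : ℤ) (m : Fin k → ℕ) (n : Fin l → ℕ) : Prop :=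
  r + ∑ i, a (m i) = ∑ j, a (n j)

/-- `(m̄,n̄) ∈ A(k,l,r,s)`: there are `s'` with `|s'| ≤ s` and proper subsets `I ⊊ [k]`,
`J ⊊ [l]`, not both empty, with `r + s' + Σ_{i∈I} a_{m_i} = Σ_{j∈J} a_{n_j}` and
`Σ_{i∉I} a_{m_i} = s' + Σ_{j∉J} a_{n_j}`. -/
def inRelS (a : ℕ → ℤ) {k l : ℕ} (r s : ℤ) (m : Fin k → ℕ) (n : Fin l → ℕ) : Prop :=
  ∃ s' : ℤ, |s'| ≤ s ∧ ∃ (I : Finset (Fin k)) (J : Finset (Fin l)),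
    I ≠ Finset.univ ∧ J ≠ Finset.univ ∧ (I.Nonempty ∨ J.Nonempty) ∧
    r + s' + ∑ i ∈ I, a (m i) = ∑ j ∈ J, a (n j) ∧
    ∑ i ∈ Iᶜ, a (m i) = s' + ∑ j ∈ Jᶜ, a (n j)

/-- Suppose `|a_n − λ_{f(n)}| ≤ Θ` for all `n`, `k, l ≥ 1`, `r ∈ ℤ`, and
`s = max{|r|, ⌈(k+l)Θ⌉}`. If `(m̄,n̄) ∈ A(k,l,r)` and there are nonempty `I* ⊆ [k]`,
`J* ⊆ [l]`, at least one proper, with `Σ_{i∈I*} λ_{f(m_i)} = Σ_{j∈J*} λ_{f(n_j)}`,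
then `(m̄,n̄) ∈ A(k,l,r,s)`. -/
theorem inRelS_of_lambda_sum_eq (A : Set ℤ) (hApos : ∀ x ∈ A, 0 < x)
    (a : ℕ → ℤ) (ha : StrictMono a) (hrange : Set.range a = A)
    (lam : ℕ → ℝ) (hlam : ∀ m, 0 < lam m) (f : ℕ → ℕ) (Θ : ℝ) (hΘ : 0 ≤ Θ)
    (happ : ∀ n : ℕ, |(a n : ℝ) - lam (f n)| ≤ Θ)
    (k l : ℕ) (hk : 1 ≤ k) (hl : 1 ≤ l) (r s : ℤ)
    (hs : s = max |r| ⌈((k + l : ℕ) : ℝ) * Θ⌉)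
    (m : Fin k → ℕ) (n : Fin l → ℕ) (hmn : inRel a r m n)
    (Istar : Finset (Fin k)) (Jstar : Finset (Fin l))
    (hI : Istar.Nonempty) (hJ : Jstar.Nonempty)
    (hproper : Istar ≠ Finset.univ ∨ Jstar ≠ Finset.univ)
    (heq : ∑ i ∈ Istar, lam (f (m i)) = ∑ j ∈ Jstar, lam (f (n j))) :
    inRelS a r s m n := by
  set s' : ℤ := ∑ i ∈ Istar, a (m i) - ∑ j ∈ Jstar, a (n j) with hs'
  have hbound : |s'| ≤ s := by
    have h1 : |(s' : ℝ)| ≤ ((k + l : ℕ) : ℝ) * Θ := by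
      have hx : (s' : ℝ) = (∑ i ∈ Istar, ((a (m i) : ℝ) - lam (f (m i))))
          - (∑ j ∈ Jstar, ((a (n j) : ℝ) - lam (f (n j)))) := by
        rw [Finset.sum_sub_distrib, Finset.sum_sub_distrib, hs']
        push_cast
        linarith [heq]
      have hIb : |∑ i ∈ Istar, ((a (m i) : ℝ) - lam (f (m i)))| ≤ (k : ℝ) * Θ := by
        calc |∑ i ∈ Istar, ((a (m i) : ℝ) - lam (f (m i)))|
            ≤ ∑ i ∈ Istar, |(a (m i) : ℝ) - lam (f (m i))| := Finset.abs_sum_le_sum_abs _ _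
          _ ≤ ∑ _i ∈ Istar, Θ := Finset.sum_le_sum fun i _ => happ (m i)
          _ = (Istar.card : ℝ) * Θ := by rw [Finset.sum_const, nsmul_eq_mul]
          _ ≤ (k : ℝ) * Θ := by
              have : (Istar.card : ℝ) ≤ (k : ℝ) := by
                exact_mod_cast (Istar.card_le_univ).trans_eq (by simp)
              exact mul_le_mul_of_nonneg_right this hΘ
      have hJb : |∑ j ∈ Jstar, ((a (n j) : ℝ) - lam (f (n j)))| ≤ (l : ℝ) * Θ := by
        calc |∑ j ∈ Jstar, ((a (n j) : ℝ) - lam (f (n j)))|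
            ≤ ∑ j ∈ Jstar, |(a (n j) : ℝ) - lam (f (n j))| := Finset.abs_sum_le_sum_abs _ _
          _ ≤ ∑ _j ∈ Jstar, Θ := Finset.sum_le_sum fun j _ => happ (n j)
          _ = (Jstar.card : ℝ) * Θ := by rw [Finset.sum_const, nsmul_eq_mul]
          _ ≤ (l : ℝ) * Θ := by
              have : (Jstar.card : ℝ) ≤ (l : ℝ) := by
                exact_mod_cast (Jstar.card_le_univ).trans_eq (by simp)
              exact mul_le_mul_of_nonneg_right this hΘ
      rw [hx]
      push_cast
      calc |(∑ i ∈ Istar, ((a (m i) : ℝ) - lam (f (m i))))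
              - (∑ j ∈ Jstar, ((a (n j) : ℝ) - lam (f (n j))))|
          ≤ |∑ i ∈ Istar, ((a (m i) : ℝ) - lam (f (m i)))|
            + |∑ j ∈ Jstar, ((a (n j) : ℝ) - lam (f (n j)))| := abs_sub _ _
        _ ≤ (k : ℝ) * Θ + (l : ℝ) * Θ := add_le_add hIb hJb
        _ = ((k : ℝ) + (l : ℝ)) * Θ := by ring
      
    have h2 : |s'| ≤ ⌈((k + l : ℕ) : ℝ) * Θ⌉ := by
      exact_mod_cast h1.trans (Int.le_ceil _)
    exact h2.trans (by rw [hs]; exact le_max_right _ _)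
  refine ⟨s', hbound, Istarᶜ, Jstarᶜ, ?_, ?_, ?_, ?_, ?_⟩
  · intro h
    rcases hI with ⟨i, hi⟩
    have : i ∈ Istarᶜ := h ▸ Finset.mem_univ i
    simp [Finset.mem_compl] at this
    exact this hi
  · intro h
    rcases hJ with ⟨j, hj⟩
    have : j ∈ Jstarᶜ := h ▸ Finset.mem_univ j
    simp [Finset.mem_compl] at this
    exact this hj
  · rcases hproper with h | h
    · refine Or.inl (Finset.nonempty_iff_ne_empty.mpr fun he => h ?_)
      exact (Finset.compl_eq_empty_iff _).mp he
    · refine Or.inr (Finset.nonempty_iff_ne_empty.mpr fun he => h ?_)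
      exact (Finset.compl_eq_empty_iff _).mp he
  · have hm : ∑ i ∈ Istar, a (m i) + ∑ i ∈ Istarᶜ, a (m i) = ∑ i, a (m i) :=
      Finset.sum_add_sum_compl Istar _
    have hn : ∑ j ∈ Jstar, a (n j) + ∑ j ∈ Jstarᶜ, a (n j) = ∑ j, a (n j) :=
      Finset.sum_add_sum_compl Jstar _
    have := hmn
    unfold inRel at this
    omega
  · rw [compl_compl, compl_compl]
    omega
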